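/- Let ℝ^N denote N-dimensional Euclidean space with inner product ⟨·,·⟩ and norm ‖·‖. Let f : ℝ^N → ℝ be differentiable with ∇f Lipschitz continuous with constant L_f, let Ψ : ℝ^N → ℝ be convex, let x ∈ ℝ^N, and let Θ be a self-adjoint linear map on ℝ^N satisfying α‖u‖² ≤ ⟨u, Θu⟩ ≤ c‖u‖² for all u ∈ ℝ^N, where 0 < α ≤ c. Suppose d̄ minimizes d ↦ ⟨∇f(x), d⟩ + (1/2)⟨d, Θd⟩ + Ψ(x + d) over ℝ^N. Then there exists a subgradient s of Ψ at x̃ := x + d̄ (i.e., Ψ(z) ≥ Ψ(x̃) + ⟨s, z − x̃⟩ for all z) such that ‖∇f(x̃) + s‖ ≤ (c + L_f)‖d̄‖. -/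

import Mathlib

open scoped RealInnerProductSpace

theorem stmt_11 {N : ℕ}
    (f Ψ : EuclideanSpace ℝ (Fin N) → ℝ)
    (gradf : EuclideanSpace ℝ (Fin N) → EuclideanSpace ℝ (Fin N))
    (hf : ∀ y, HasGradientAt f (gradf y) y)
    (Lf : ℝ) (hLf : 0 ≤ Lf)
    (hlip : ∀ y z, ‖gradf y - gradf z‖ ≤ Lf * ‖y - z‖)
    (hΨ : ConvexOn ℝ Set.univ Ψ)
    (x : EuclideanSpace ℝ (Fin N))
    (Θ : EuclideanSpace ℝ (Fin N) →ₗ[ℝ] EuclideanSpace ℝ (Fin N))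
    (hΘsym : Θ.IsSymmetric)
    (α c : ℝ) (hα : 0 < α) (hαc : α ≤ c)
    (hΘlb : ∀ u, α * ‖u‖ ^ 2 ≤ ⟪u, Θ u⟫)
    (hΘub : ∀ u, ⟪u, Θ u⟫ ≤ c * ‖u‖ ^ 2)
    (dbar : EuclideanSpace ℝ (Fin N))
    (hdbar : ∀ d, ⟪gradf x, dbar⟫ + 1 / 2 * ⟪dbar, Θ dbar⟫ + Ψ (x + dbar) ≤
      ⟪gradf x, d⟫ + 1 / 2 * ⟪d, Θ d⟫ + Ψ (x + d)) :
    ∃ s : EuclideanSpace ℝ (Fin N),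
      (∀ z, Ψ z ≥ Ψ (x + dbar) + ⟪s, z - (x + dbar)⟫) ∧
      ‖gradf (x + dbar) + s‖ ≤ (c + Lf) * ‖dbar‖ := by
  have hc : 0 < c := lt_of_lt_of_le hα hαc
  have hΘpos : ∀ u : EuclideanSpace ℝ (Fin N), (0:ℝ) ≤ ⟪u, Θ u⟫ := by
    intro u
    have := hΘlb u
    nlinarith [sq_nonneg ‖u‖]
  refine ⟨-(gradf x + Θ dbar), ?_, ?_⟩
  · intro z
    set v := z - (x + dbar) with hv
    have key : ∀ t : ℝ, 0 < t → t ≤ 1 →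
        Ψ (x + dbar) + ⟪-(gradf x + Θ dbar), v⟫ - Ψ z ≤ t * (⟪v, Θ v⟫ / 2) := by
      intro t ht ht1
      have hmin := hdbar (dbar + t • v)
      have hpt : x + (dbar + t • v) = (1 - t) • (x + dbar) + t • z := by
        simp [hv, smul_sub, sub_smul, one_smul]
        abel
      have hconv := hΨ.2 (Set.mem_univ (x + dbar)) (Set.mem_univ z)
        (by linarith : (0:ℝ) ≤ 1 - t) (le_of_lt ht) (by ring)
      rw [← hpt] at hconv
      have e1 : ⟪gradf x, dbar + t • v⟫ = ⟪gradf x, dbar⟫ + t * ⟪gradf x, v⟫ := by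
        rw [inner_add_right, real_inner_smul_right]
      have esym : ⟪dbar, Θ v⟫ = ⟪v, Θ dbar⟫ := by
        rw [← hΘsym dbar v, real_inner_comm]
      have e2 : ⟪dbar + t • v, Θ (dbar + t • v)⟫
          = ⟪dbar, Θ dbar⟫ + 2 * t * ⟪v, Θ dbar⟫ + t ^ 2 * ⟪v, Θ v⟫ := by
        simp only [map_add, map_smul, inner_add_left, inner_add_right,
          real_inner_smul_left, real_inner_smul_right, esym]
        ring
      have eneg : ⟪-(gradf x + Θ dbar), v⟫ = -⟪gradf x, v⟫ - ⟪v, Θ dbar⟫ := by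
        rw [inner_neg_left, inner_add_left, real_inner_comm (Θ dbar) v]
        ring
      rw [e1, e2] at hmin
      have h2 : t * (Ψ (x + dbar) + ⟪-(gradf x + Θ dbar), v⟫ - Ψ z)
          ≤ t * (t * (⟪v, Θ v⟫ / 2)) := by
        rw [eneg]
        simp only [smul_eq_mul] at hconv
        nlinarith [hmin, hconv]
      have := (mul_le_mul_iff_right₀ ht).mp h2
      exact this
    have hQ : (0:ℝ) ≤ ⟪v, Θ v⟫ / 2 := by linarith [hΘpos v]
    have hA : Ψ (x + dbar) + ⟪-(gradf x + Θ dbar), v⟫ - Ψ z ≤ 0 := by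
      refine le_of_forall_pos_le_add ?_
      intro ε hε
      have hden : (0:ℝ) < ⟪v, Θ v⟫ / 2 + 1 := by linarith
      set t := min 1 (ε / (⟪v, Θ v⟫ / 2 + 1)) with htdef
      have ht0 : 0 < t := lt_min one_pos (div_pos hε hden)
      have ht1 : t ≤ 1 := min_le_left _ _
      have ht2 : t ≤ ε / (⟪v, Θ v⟫ / 2 + 1) := min_le_right _ _
      have := key t ht0 ht1
      have htQ : t * (⟪v, Θ v⟫ / 2) ≤ ε := by
        have : t * (⟪v, Θ v⟫ / 2 + 1) ≤ ε := by
          calc t * (⟪v, Θ v⟫ / 2 + 1) ≤ (ε / (⟪v, Θ v⟫ / 2 + 1)) * (⟪v, Θ v⟫ / 2 + 1) :=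
                mul_le_mul_of_nonneg_right ht2 (le_of_lt hden)
            _ = ε := div_mul_cancel₀ ε (ne_of_gt hden)
        nlinarith
      linarith
    linarith [hA]
  · -- norm bound
    have hΘnorm : ‖Θ dbar‖ ≤ c * ‖dbar‖ := by
      set u := Θ dbar with hu
      have hq : ∀ t : ℝ, 0 ≤ ⟪dbar, Θ dbar⟫ * (t * t) + (2 * ⟪u, Θ dbar⟫) * t + ⟪u, Θ u⟫ := by
        intro t
        have h := hΘpos (u + t • dbar)
        have esym : ⟪dbar, Θ u⟫ = ⟪u, Θ dbar⟫ := by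
          rw [← hΘsym dbar u, real_inner_comm]
        simp only [map_add, map_smul, inner_add_left, inner_add_right,
          real_inner_smul_left, real_inner_smul_right, esym] at h
        nlinarith [h]
      have hdisc := discrim_le_zero hq
      rw [discrim] at hdisc
      have hp : ⟪u, Θ dbar⟫ = ‖Θ dbar‖ ^ 2 := by
        rw [hu, real_inner_self_eq_norm_sq]
      have ha : ⟪dbar, Θ dbar⟫ ≤ c * ‖dbar‖ ^ 2 := hΘub dbar
      have hb : ⟪u, Θ u⟫ ≤ c * ‖u‖ ^ 2 := hΘub u
      rw [hp] at hdisc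
      have hn4 : ‖Θ dbar‖ ^ 4 ≤ c ^ 2 * ‖dbar‖ ^ 2 * ‖Θ dbar‖ ^ 2 := by
        have hmul : ⟪dbar, Θ dbar⟫ * ⟪u, Θ u⟫ ≤ (c * ‖dbar‖ ^ 2) * (c * ‖‖Θ dbar‖‖ ^ 2) := by
          have hb2 : ⟪u, Θ u⟫ ≤ c * ‖Θ dbar‖ ^ 2 := hb
          have ha2 : (0:ℝ) ≤ ⟪u, Θ u⟫ := hΘpos u
          have hc2 : (0:ℝ) ≤ c * ‖dbar‖ ^ 2 := by positivity
          calc ⟪dbar, Θ dbar⟫ * ⟪u, Θ u⟫ ≤ (c * ‖dbar‖ ^ 2) * ⟪u, Θ u⟫ :=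
                mul_le_mul_of_nonneg_right ha ha2
            _ ≤ (c * ‖dbar‖ ^ 2) * (c * ‖‖Θ dbar‖‖ ^ 2) := by
                rw [Real.norm_eq_abs, sq_abs]
                exact mul_le_mul_of_nonneg_left hb hc2
        rw [Real.norm_eq_abs, sq_abs] at hmul
        nlinarith [hdisc, hmul]
      by_cases hn : ‖Θ dbar‖ = 0
      · rw [hn]; positivity
      · have hnpos : 0 < ‖Θ dbar‖ := lt_of_le_of_ne (norm_nonneg _) (Ne.symm hn)
        have hn2 : ‖Θ dbar‖ ^ 2 ≤ c ^ 2 * ‖dbar‖ ^ 2 := by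
          nlinarith [hn4, mul_pos hnpos hnpos]
        show ‖Θ dbar‖ ≤ c * ‖dbar‖
        nlinarith [hn2, hnpos, mul_nonneg hc.le (norm_nonneg dbar)]
    have hrw : gradf (x + dbar) + -(gradf x + Θ dbar)
        = (gradf (x + dbar) - gradf x) + (-(Θ dbar)) := by abel
    rw [hrw]
    have h1 : ‖gradf (x + dbar) - gradf x‖ ≤ Lf * ‖dbar‖ := by
      have := hlip (x + dbar) x
      simpa [add_sub_cancel_left] using this
    calc ‖(gradf (x + dbar) - gradf x) + (-(Θ dbar))‖
        ≤ ‖gradf (x + dbar) - gradf x‖ + ‖-(Θ dbar)‖ := norm_add_le _ _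
      _ = ‖gradf (x + dbar) - gradf x‖ + ‖Θ dbar‖ := by rw [norm_neg]
      _ ≤ Lf * ‖dbar‖ + c * ‖dbar‖ := add_le_add h1 hΘnorm
      _ = (c + Lf) * ‖dbar‖ := by ring
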